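/- For every n ≥ 2, the smallest binary value of an Ulam word of length n is 1 (attained by 0^{n-1}1) and the largest is 2^n - 2 (attained by 1^{n-1}0). -/

import Mathlib

/-- Ulam words with fuel bounding the recursion depth (fuel ≥ length suffices). -/
def UlamN : ℕ → List Bool → Prop
  | 0, _ => False
  | n + 1, w =>
    w = [false] ∨ w = [true] ∨
      ∃! p : List Bool × List Bool,
        p.1 ≠ [] ∧ p.2 ≠ [] ∧ UlamN n p.1 ∧ UlamN n p.2 ∧ p.1 ≠ p.2 ∧ p.1 ++ p.2 = w

/-- A word over {0,1} (`false` = 0, `true` = 1) is Ulam. -/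
def IsUlam (w : List Bool) : Prop := UlamN w.length w

/-- The integer whose binary representation (most significant digit first) is `w`. -/
def binVal (w : List Bool) : ℕ := w.foldl (fun acc b => 2 * acc + b.toNat) 0

lemma ulamN_succ_iff (n : ℕ) (w : List Bool) :
    UlamN (n+1) w ↔ w = [false] ∨ w = [true] ∨
      ∃! p : List Bool × List Bool,
        p.1 ≠ [] ∧ p.2 ≠ [] ∧ UlamN n p.1 ∧ UlamN n p.2 ∧ p.1 ≠ p.2 ∧ p.1 ++ p.2 = w :=
  Iff.rfl

lemma ulamN_nil (m : ℕ) : ¬ UlamN m [] := by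
  cases m with
  | zero => exact id
  | succ m =>
    rw [ulamN_succ_iff]
    rintro (h | h | ⟨⟨p1, p2⟩, ⟨h1, h2, -, -, -, h6⟩, -⟩)
    · exact List.cons_ne_nil _ _ h.symm
    · exact List.cons_ne_nil _ _ h.symm
    · exact h1 (List.append_eq_nil_iff.mp h6).1

lemma ulamN_stable : ∀ (N : ℕ) (w : List Bool), w.length ≤ N →
    ∀ m k, w.length ≤ m → w.length ≤ k → (UlamN m w ↔ UlamN k w) := by
  intro N
  induction N with
  | zero =>
    intro w hw m k _ _
    have hw' : w = [] := List.length_eq_zero_iff.mp (Nat.le_zero.mp hw)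
    subst hw'
    simp [ulamN_nil]
  | succ N ih =>
    intro w hw m k hm hk
    rcases w with _ | ⟨b, t⟩
    · simp [ulamN_nil]
    · simp only [List.length_cons] at hw hm hk
      obtain ⟨m, rfl⟩ : ∃ m', m = m' + 1 := ⟨m - 1, by omega⟩
      obtain ⟨k, rfl⟩ : ∃ k', k = k' + 1 := ⟨k - 1, by omega⟩
      rw [ulamN_succ_iff, ulamN_succ_iff]
      refine or_congr Iff.rfl (or_congr Iff.rfl (existsUnique_congr ?_))
      rintro ⟨p1, p2⟩
      constructor
      · rintro ⟨h1, h2, h3, h4, h5, h6⟩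
        have hlen : p1.length + p2.length = t.length + 1 := by
          have := congrArg List.length h6; simpa using this
        have hp1 : 0 < p1.length := List.length_pos_iff.mpr h1
        have hp2 : 0 < p2.length := List.length_pos_iff.mpr h2
        exact ⟨h1, h2, (ih p1 (by omega) m k (by omega) (by omega)).mp h3,
          (ih p2 (by omega) m k (by omega) (by omega)).mp h4, h5, h6⟩
      · rintro ⟨h1, h2, h3, h4, h5, h6⟩
        have hlen : p1.length + p2.length = t.length + 1 := by
          have := congrArg List.length h6; simpa using this
        have hp1 : 0 < p1.length := List.length_pos_iff.mpr h1
        have hp2 : 0 < p2.length := List.length_pos_iff.mpr h2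
        exact ⟨h1, h2, (ih p1 (by omega) m k (by omega) (by omega)).mpr h3,
          (ih p2 (by omega) m k (by omega) (by omega)).mpr h4, h5, h6⟩

lemma ulamN_iff_isUlam {w : List Bool} {m : ℕ} (h : w.length ≤ m) : UlamN m w ↔ IsUlam w :=
  ulamN_stable m w h m w.length h le_rfl

lemma map_not_inj {a b : List Bool} (h : a.map not = b.map not) : a = b := by
  have := congrArg (List.map not) h
  simpa [List.map_map, Function.comp_def, Bool.not_not] using this

lemma ulamN_map_not : ∀ (m : ℕ) (w : List Bool), UlamN m w → UlamN m (w.map not) := by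
  intro m
  induction m with
  | zero => intro w h; exact h.elim
  | succ m ih =>
    intro w h
    rw [ulamN_succ_iff] at h ⊢
    rcases h with h | h | ⟨⟨p1, p2⟩, ⟨h1, h2, h3, h4, h5, h6⟩, huniq⟩
    · subst h; right; left; rfl
    · subst h; left; rfl
    · right; right
      refine ⟨(p1.map not, p2.map not), ⟨by simp [h1], by simp [h2], ih _ h3, ih _ h4,
        fun hc => h5 (map_not_inj hc), by simp [← h6]⟩, ?_⟩
      rintro ⟨q1, q2⟩ ⟨g1, g2, g3, g4, g5, g6⟩
      have e : (q1.map not, q2.map not) = (p1, p2) := by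
        apply huniq
        refine ⟨by simp [g1], by simp [g2], ih _ g3, ih _ g4,
          fun hc => g5 (map_not_inj hc), ?_⟩
        have : (q1 ++ q2).map not = (w.map not).map not := by rw [g6]
        simpa [List.map_map, Function.comp_def, Bool.not_not] using this
      have e1 : q1.map not = p1 := congrArg Prod.fst e
      have e2 : q2.map not = p2 := congrArg Prod.snd e
      rw [Prod.mk.injEq]
      constructor
      · rw [← e1]; simp [List.map_map, Function.comp_def, Bool.not_not]
      · rw [← e2]; simp [List.map_map, Function.comp_def, Bool.not_not]

lemma isUlam_map_not {w : List Bool} (h : IsUlam w) : IsUlam (w.map not) := by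
  unfold IsUlam at *
  rw [List.length_map]
  exact ulamN_map_not _ _ h

lemma isUlam_false : IsUlam [false] := Or.inl rfl

lemma isUlam_true : IsUlam [true] := Or.inr (Or.inl rfl)

lemma split_replicate {a : Bool} {p1 p2 : List Bool} {n : ℕ}
    (h : p1 ++ p2 = List.replicate n a) :
    p1 = List.replicate p1.length a ∧ p2 = List.replicate p2.length a ∧
      p1.length + p2.length = n := by
  have hmem : ∀ b ∈ p1 ++ p2, b = a := by
    rw [h]; exact fun b hb => List.eq_of_mem_replicate hb
  refine ⟨List.eq_replicate_iff.mpr ⟨rfl, fun b hb => hmem b (List.mem_append_left _ hb)⟩,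
    List.eq_replicate_iff.mpr ⟨rfl, fun b hb => hmem b (List.mem_append_right _ hb)⟩, ?_⟩
  have := congrArg List.length h; simpa using this

lemma split_A {p1 p2 : List Bool} {k : ℕ}
    (h : p1 ++ p2 = List.replicate k false ++ [true]) (h2 : p2 ≠ []) :
    ∃ i j, i + j = k ∧ p1 = List.replicate i false ∧
      p2 = List.replicate j false ++ [true] := by
  rcases List.append_eq_append_iff.mp h with ⟨a, ha1, ha2⟩ | ⟨c, hc1, hc2⟩
  · obtain ⟨e1, e2, hsum⟩ := split_replicate ha1.symm
    exact ⟨p1.length, a.length, hsum, e1, by rw [ha2, ← e2]⟩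
  · have hc : c = [] := by
      have hl := congrArg List.length hc2
      simp only [List.length_append, List.length_cons, List.length_nil] at hl
      have hp := List.length_pos_iff.mpr h2
      have hc0 : c.length = 0 := by omega
      exact List.length_eq_zero_iff.mp hc0
    subst hc
    exact ⟨k, 0, by omega, by simpa using hc1, by simpa using hc2.symm⟩

lemma notUlam_zeros : ∀ n, 2 ≤ n → ¬ IsUlam (List.replicate n false) := by
  intro n
  induction n using Nat.strong_induction_on with
  | _ n ih =>
    intro hn h
    unfold IsUlam at h
    rw [List.length_replicate] at h
    obtain ⟨m, rfl⟩ : ∃ m, n = m + 1 := ⟨n - 1, by omega⟩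
    rw [ulamN_succ_iff] at h
    rcases h with h | h | ⟨⟨p1, p2⟩, ⟨h1, h2, h3, h4, h5, h6⟩, -⟩
    · have := congrArg List.length h; simp at this; omega
    · rw [List.replicate_succ] at h
      simp at h
    · dsimp only at h1 h2 h3 h4 h5 h6
      obtain ⟨e1, e2, hsum⟩ := split_replicate h6
      have l1 : 0 < p1.length := List.length_pos_iff.mpr h1
      have l2 : 0 < p2.length := List.length_pos_iff.mpr h2
      have hu1 : IsUlam p1 := (ulamN_iff_isUlam (by omega)).mp h3
      have hu2 : IsUlam p2 := (ulamN_iff_isUlam (by omega)).mp h4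
      have e1' : p1.length = 1 := by
        by_contra hc
        exact ih p1.length (by omega) (by omega) (e1 ▸ hu1)
      have e2' : p2.length = 1 := by
        by_contra hc
        exact ih p2.length (by omega) (by omega) (e2 ▸ hu2)
      apply h5
      rw [e1, e2, e1', e2']

lemma ulam_A : ∀ k, IsUlam (List.replicate k false ++ [true]) := by
  intro k
  induction k with
  | zero => simpa using isUlam_true
  | succ k ih =>
    unfold IsUlam
    have hlen : (List.replicate (k+1) false ++ [true]).length = (k + 1) + 1 := by simp
    rw [hlen, ulamN_succ_iff]
    right; right
    refine ⟨([false], List.replicate k false ++ [true]),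
      ⟨by simp, by simp, ?_, ?_, ?_, ?_⟩, ?_⟩
    · exact (ulamN_iff_isUlam (by simp)).mpr isUlam_false
    · exact (ulamN_iff_isUlam (by simp)).mpr ih
    · intro hc
      dsimp only at hc
      have : true ∈ [false] := by rw [hc]; simp
      simp at this
    · simp [List.replicate_succ]
    · rintro ⟨q1, q2⟩ ⟨g1, g2, g3, g4, g5, g6⟩
      dsimp only at g1 g2 g3 g4 g5 g6
      obtain ⟨i, j, hij, hq1, hq2⟩ := split_A g6 g2
      have hlen1 : q1.length = i := by rw [hq1]; simp
      have hlen2 : q2.length = j + 1 := by rw [hq2]; simp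
      have hi : 0 < i := by
        have := List.length_pos_iff.mpr g1; omega
      have hu1 : IsUlam q1 := (ulamN_iff_isUlam (by omega)).mp g3
      have hi1 : i = 1 := by
        by_contra hc
        exact notUlam_zeros i (by omega) (hq1 ▸ hu1)
      have hj : j = k := by omega
      subst hi1; subst hj
      rw [Prod.mk.injEq]
      exact ⟨by simpa using hq1, hq2⟩

lemma ulam_B (k : ℕ) : IsUlam (List.replicate k true ++ [false]) := by
  have := isUlam_map_not (ulam_A k)
  simpa using this

lemma notUlam_ones (n : ℕ) (hn : 2 ≤ n) : ¬ IsUlam (List.replicate n true) := by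
  intro h
  have := isUlam_map_not h
  rw [List.map_replicate] at this
  exact notUlam_zeros n hn (by simpa using this)

lemma binVal_foldl (w : List Bool) : ∀ a : ℕ,
    w.foldl (fun acc b => 2 * acc + b.toNat) a = a * 2 ^ w.length + binVal w := by
  induction w with
  | nil => intro a; simp [binVal]
  | cons b t ih =>
    intro a
    have h1 : binVal (b :: t) = b.toNat * 2 ^ t.length + binVal t := by
      show t.foldl _ (2 * 0 + b.toNat) = _
      rw [ih]
      ring_nf
    show t.foldl _ (2 * a + b.toNat) = _
    rw [ih, h1, List.length_cons, pow_succ]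
    ring

lemma binVal_cons (b : Bool) (t : List Bool) :
    binVal (b :: t) = b.toNat * 2 ^ t.length + binVal t := by
  show t.foldl _ (2 * 0 + b.toNat) = _
  rw [binVal_foldl]
  ring_nf

lemma binVal_append (u v : List Bool) :
    binVal (u ++ v) = binVal u * 2 ^ v.length + binVal v := by
  show (u ++ v).foldl _ 0 = _
  rw [List.foldl_append]
  exact binVal_foldl v (binVal u)

lemma binVal_lt (w : List Bool) : binVal w < 2 ^ w.length := by
  induction w with
  | nil => simp [binVal]
  | cons b t ih =>
    rw [binVal_cons, List.length_cons, pow_succ]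
    cases b <;> simp [Bool.toNat] <;> omega

lemma binVal_replicate_false (k : ℕ) : binVal (List.replicate k false) = 0 := by
  induction k with
  | zero => rfl
  | succ k ih => rw [List.replicate_succ, binVal_cons, ih]; simp

lemma binVal_replicate_true (k : ℕ) : binVal (List.replicate k true) = 2 ^ k - 1 := by
  induction k with
  | zero => rfl
  | succ k ih =>
    rw [List.replicate_succ, binVal_cons, ih, List.length_replicate, pow_succ]
    have : 1 ≤ 2 ^ k := Nat.one_le_two_pow
    simp [Bool.toNat]
    omega

lemma binVal_eq_zero {w : List Bool} (h : binVal w = 0) :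
    w = List.replicate w.length false := by
  induction w with
  | nil => rfl
  | cons b t ih =>
    rw [binVal_cons] at h
    have h2 : 0 < 2 ^ t.length := Nat.pow_pos (by norm_num)
    cases b with
    | true => simp [Bool.toNat] at h
    | false =>
      simp at h
      rw [List.length_cons, List.replicate_succ, ← ih h]

lemma binVal_eq_max {w : List Bool} (h : binVal w = 2 ^ w.length - 1) :
    w = List.replicate w.length true := by
  induction w with
  | nil => rfl
  | cons b t ih =>
    rw [binVal_cons, List.length_cons, pow_succ] at h
    have hlt : binVal t < 2 ^ t.length := binVal_lt t
    have h2 : 0 < 2 ^ t.length := Nat.pow_pos (by norm_num)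
    cases b with
    | false => simp at h; omega
    | true =>
      simp [Bool.toNat] at h
      have ht : binVal t = 2 ^ t.length - 1 := by omega
      rw [List.length_cons, List.replicate_succ, ← ih ht]

theorem ulam_extreme_values (n : ℕ) (hn : 2 ≤ n) :
    IsLeast {v : ℕ | ∃ w : List Bool, w.length = n ∧ IsUlam w ∧ binVal w = v} 1 ∧
    IsGreatest {v : ℕ | ∃ w : List Bool, w.length = n ∧ IsUlam w ∧ binVal w = v}
      (2 ^ n - 2) ∧
    IsUlam (List.replicate (n - 1) false ++ [true]) ∧
    binVal (List.replicate (n - 1) false ++ [true]) = 1 ∧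
    IsUlam (List.replicate (n - 1) true ++ [false]) ∧
    binVal (List.replicate (n - 1) true ++ [false]) = 2 ^ n - 2 := by
  have hAlen : (List.replicate (n - 1) false ++ [true]).length = n := by simp; omega
  have hBlen : (List.replicate (n - 1) true ++ [false]).length = n := by simp; omega
  have hAval : binVal (List.replicate (n - 1) false ++ [true]) = 1 := by
    rw [binVal_append, binVal_replicate_false]
    rfl
  have hpow : 2 ^ n = 2 * 2 ^ (n - 1) := by
    rw [← pow_succ']
    congr 1
    omega
  have hpow1 : 1 ≤ 2 ^ (n - 1) := Nat.one_le_two_pow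
  have hBval : binVal (List.replicate (n - 1) true ++ [false]) = 2 ^ n - 2 := by
    rw [binVal_append, binVal_replicate_true]
    show (2 ^ (n - 1) - 1) * 2 ^ 1 + 0 = 2 ^ n - 2
    omega
  refine ⟨⟨⟨_, hAlen, ulam_A (n - 1), hAval⟩, ?_⟩,
    ⟨⟨_, hBlen, ulam_B (n - 1), hBval⟩, ?_⟩,
    ulam_A (n - 1), hAval, ulam_B (n - 1), hBval⟩
  · rintro v ⟨w, hl, hu, rfl⟩
    by_contra hv
    have hv0 : binVal w = 0 := by omega
    have := binVal_eq_zero hv0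
    rw [hl] at this
    exact notUlam_zeros n hn (this ▸ hu)
  · rintro v ⟨w, hl, hu, rfl⟩
    have hlt := binVal_lt w
    rw [hl] at hlt
    by_contra hv
    have hv1 : binVal w = 2 ^ n - 1 := by omega
    have := binVal_eq_max (by rw [hl]; exact hv1)
    rw [hl] at this
    exact notUlam_ones n hn (this ▸ hu)
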